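/- Let M, N, K be elements of a von Neumann algebra A with M, N dissipative and invertible, and suppose the Schur complement M - K*N⁻¹K is invertible. Then N - KM⁻¹K* is also invertible, and its inverse satisfies (N - KM⁻¹K*)⁻¹ = N⁻¹ + N⁻¹K (M - K*N⁻¹K)⁻¹ K* N⁻¹. -/

import Mathlib

open Complex

variable {H : Type*} [NormedAddCommGroup H] [InnerProductSpace ℂ H] [CompleteSpace H]

/-- `M` is dissipative: `Im ⟪x, M x⟫ ≥ 0` for all `x`. -/
def IsDissipative (M : H →L[ℂ] H) : Prop := ∀ x : H, 0 ≤ (inner ℂ x (M x) : ℂ).im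

/-- Let `M`, `N` be invertible dissipative operators and `K` arbitrary, and suppose
the Schur complement `M - K*N⁻¹K` is invertible.  Then `N - KM⁻¹K*` is invertible and
`(N - KM⁻¹K*)⁻¹ = N⁻¹ + N⁻¹ K (M - K*N⁻¹K)⁻¹ K* N⁻¹`. -/
theorem schur_complement_inverse (M N K : H →L[ℂ] H)
    (hM : IsDissipative M) (hN : IsDissipative N)
    (hMinv : IsUnit M) (hNinv : IsUnit N)
    (hS : IsUnit (M - star K * Ring.inverse N * K)) :
    IsUnit (N - K * Ring.inverse M * star K) ∧
    Ring.inverse (N - K * Ring.inverse M * star K) =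
      Ring.inverse N +
        Ring.inverse N * K * Ring.inverse (M - star K * Ring.inverse N * K) *
          star K * Ring.inverse N := by
  set a := Ring.inverse M with ha_def
  set b := Ring.inverse N with hb_def
  set S := M - star K * b * K with hS_def
  set s := Ring.inverse S with hs_def
  have haM : a * M = 1 := Ring.inverse_mul_cancel M hMinv
  have hMa : M * a = 1 := Ring.mul_inverse_cancel M hMinv
  have hbN : b * N = 1 := Ring.inverse_mul_cancel N hNinv
  have hNb : N * b = 1 := Ring.mul_inverse_cancel N hNinv
  have hsS : s * S = 1 := Ring.inverse_mul_cancel S hS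
  have hSs : S * s = 1 := Ring.mul_inverse_cancel S hS
  have hKK : star K * b * K = M - S := by rw [hS_def]; noncomm_ring
  have h1 : K * a * (star K * b * K) * s = K * s - K * a := by
    rw [hKK]
    calc K * a * (M - S) * s = K * (a * M) * s - K * a * (S * s) := by noncomm_ring
      _ = K * s - K * a := by rw [haM, hSs]; noncomm_ring
  have h2 : s * (star K * b * K) * a = s - a := by
    rw [hKK]
    calc s * (M - S) * a = s * (M * a) - (s * S) * a := by noncomm_ring
      _ = s - a := by rw [hMa, hsS]; noncomm_ring
  have goal1 : (N - K * a * star K) * (b + b * K * s * star K * b) = 1 := by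
    calc (N - K * a * star K) * (b + b * K * s * star K * b)
        = N * b + (N * b) * (K * s * star K * b) - K * a * star K * b
            - (K * a * (star K * b * K) * s) * (star K * b) := by noncomm_ring
      _ = 1 + 1 * (K * s * star K * b) - K * a * star K * b
            - (K * s - K * a) * (star K * b) := by rw [hNb, h1]
      _ = 1 := by noncomm_ring
  have goal2 : (b + b * K * s * star K * b) * (N - K * a * star K) = 1 := by
    calc (b + b * K * s * star K * b) * (N - K * a * star K)
        = b * N + (b * K * s * star K) * (b * N) - b * K * a * star K
            - (b * K) * (s * (star K * b * K) * a) * star K := by noncomm_ring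
      _ = 1 + (b * K * s * star K) * 1 - b * K * a * star K
            - (b * K) * (s - a) * star K := by rw [hbN, h2]
      _ = 1 := by noncomm_ring
  let u : (H →L[ℂ] H)ˣ := ⟨N - K * a * star K, b + b * K * s * star K * b, goal1, goal2⟩
  exact ⟨⟨u, rfl⟩, (Ring.inverse_unit u).trans rfl⟩
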